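/- (Closed form of the kernel K'.) Let α > 1 be real and K̂'(k) = ((p^α − p)/(p^α(p−1))) · p^{−α·⌊log_p k⌋} for k ≥ 1. Let z ∈ (0,1) with base-p digits z_j = ⌊p^j z⌋ mod p, and suppose i ≥ 1 is such that z_j = 0 for all 1 ≤ j < i and z_i ≠ 0. Then Σ_{k=1}^∞ K̂'(k) wal_k(z) = 1 − p^{i(1−α)} (p^α − 1)/(p − 1). -/

import Mathlib

open scoped BigOperators

/-- `ω_p = exp(2πi/p)`. -/
noncomputable def omega (p : ℕ) : ℂ := Complex.exp (2 * Real.pi * Complex.I / p)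

/-- The `i`-th base-`p` digit of the natural number `n` (starting from `i = 0`). -/
def ndigit (p n i : ℕ) : ℕ := (n / p ^ i) % p

/-- The `i`-th base-`p` digit of the real number `x` (starting from `i = 1`):
`x_i = ⌊p^i x⌋ mod p`. -/
noncomputable def xdigit (p : ℕ) (x : ℝ) (i : ℕ) : ℕ := (⌊(p : ℝ) ^ i * x⌋).toNat % p

/-- The base-`p` Walsh function `wal_k(x) = ω_p^{x_1 k_0 + x_2 k_1 + ⋯}`
(the digits of `k` vanish beyond index `k`, so the sum below is the full series). -/
noncomputable def wal (p k : ℕ) (x : ℝ) : ℂ :=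
  omega p ^ (∑ i ∈ Finset.range (k + 1), xdigit p x (i + 1) * ndigit p k i)

/-- Multivariate Walsh function `wal_k(x) = ∏_j wal_{k_j}(x_j)`. -/
noncomputable def walS (p s : ℕ) (k : Fin s → ℕ) (x : Fin s → ℝ) : ℂ :=
  ∏ j, wal p (k j) (x j)

/-- The vector of the first `m` base-`p` digits of `n`, viewed in `ℤ_p^m`. -/
def nvec (p m : ℕ) (n : ℕ) : Fin m → ZMod p := fun i => (ndigit p n i : ZMod p)

/-- The `n`-th point of the digital net generated by matrices `C = (C_1,…,C_s)`:
`x_{j,n} = Σ_{i=1}^m y_{j,n,i} p^{-i}` where `y⃗_{j,n} = C_j n⃗`. -/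
noncomputable def netPoint (p s m : ℕ) (C : Fin s → Matrix (Fin m) (Fin m) (ZMod p)) (n : ℕ) :
    Fin s → ℝ :=
  fun j => ∑ i : Fin m, ((Matrix.mulVec (C j) (nvec p m n)) i).val / (p : ℝ) ^ (i.val + 1)

/-- `C·k = C_1ᵀ k⃗_1^{(m)} + ⋯ + C_sᵀ k⃗_s^{(m)} ∈ ℤ_p^m`. -/
def Cdot (p s m : ℕ) (C : Fin s → Matrix (Fin m) (Fin m) (ZMod p)) (k : Fin s → ℕ) :
    Fin m → ZMod p :=
  ∑ j, Matrix.mulVec (Matrix.transpose (C j)) (nvec p m (k j))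

/-- Digitwise addition modulo `p` of base-`p` digits: `k ⊕ l`. -/
def dadd (p k l : ℕ) : ℕ :=
  ∑ i ∈ Finset.range (k + l + 1), ((ndigit p k i + ndigit p l i) % p) * p ^ i

/-- Digitwise subtraction modulo `p` of base-`p` digits: `k ⊖ l`. -/
def dsub (p k l : ℕ) : ℕ :=
  ∑ i ∈ Finset.range (k + l + 1), ((ndigit p k i + (p - ndigit p l i)) % p) * p ^ i
section lemmas
variable {p : ℕ} (hp : 2 ≤ p)

lemma omega_pow_p (hp0 : p ≠ 0) : omega p ^ p = 1 :=
  (Complex.isPrimitiveRoot_exp p hp0).pow_eq_one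

lemma omega_pow_ne_one {c : ℕ} (hc0 : 0 < c) (hcp : c < p) : omega p ^ c ≠ 1 :=
  (Complex.isPrimitiveRoot_exp p (by omega)).pow_ne_one_of_pos_of_lt hc0.ne' hcp

lemma abs_omega (hp0 : p ≠ 0) : ‖omega p‖ = 1 := by
  have : (2 * Real.pi * Complex.I / p) = ((2 * Real.pi / p : ℝ) : ℂ) * Complex.I := by
    push_cast; ring
  rw [omega, this, Complex.norm_exp_ofReal_mul_I]

lemma abs_wal (hp0 : p ≠ 0) (k : ℕ) (z : ℝ) : ‖wal p k z‖ = 1 := by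
  rw [wal, norm_pow, abs_omega hp0, one_pow]

lemma ndigit_eq_zero {k i : ℕ} (h : k < p ^ i) : ndigit p k i = 0 := by
  rw [ndigit, Nat.div_eq_of_lt h, Nat.zero_mod]

lemma xdigit_lt (hp0 : 0 < p) (x : ℝ) (i : ℕ) : xdigit p x i < p := Nat.mod_lt _ hp0

/-- `wal` with sum truncated/extended to any `m` with `k < p^m`. -/
lemma wal_eq (hp : 2 ≤ p) {k m : ℕ} (h : k < p ^ m) (z : ℝ) :
    wal p k z = omega p ^ (∑ i ∈ Finset.range m, xdigit p z (i + 1) * ndigit p k i) := by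
  rw [wal]
  congr 1
  rcases le_total (k + 1) m with hm | hm
  · rw [Finset.sum_subset (Finset.range_subset_range.2 hm)]
    intro i _ hi
    simp only [Finset.mem_range, not_lt] at hi
    have : k < p ^ i := lt_of_lt_of_le (Nat.lt_pow_self hp : k < p ^ k) (Nat.pow_le_pow_right (by omega) (by omega))
    rw [ndigit_eq_zero this, mul_zero]
  · rw [eq_comm, Finset.sum_subset (Finset.range_subset_range.2 hm)]
    intro i _ hi
    simp only [Finset.mem_range, not_lt] at hi
    have : k < p ^ i := lt_of_lt_of_le h (Nat.pow_le_pow_right (by omega) hi)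
    rw [ndigit_eq_zero this, mul_zero]

end lemmas

section Wsec
variable {p : ℕ}

lemma ndigit_add_low (hp : 2 ≤ p) {k d m i : ℕ} (hk : k < p ^ m) (hi : i < m) :
    ndigit p (d * p ^ m + k) i = ndigit p k i := by
  have hpm : d * p ^ m + k = k + (d * p ^ (m - i - 1) * p) * p ^ i := by
    rw [mul_assoc, mul_assoc, ← pow_succ', ← pow_add]
    have : m - i - 1 + (i + 1) = m := by omega
    rw [this]; ring
  rw [ndigit, ndigit, hpm, Nat.add_mul_div_right _ _ (by positivity), Nat.add_mul_mod_self_right]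

lemma ndigit_add_high (hp : 2 ≤ p) {k d m : ℕ} (hk : k < p ^ m) (hd : d < p) :
    ndigit p (d * p ^ m + k) m = d := by
  have h2 : d * p ^ m + k = k + d * p ^ m := by ring
  rw [ndigit, h2, Nat.add_mul_div_right _ _ (by positivity), Nat.div_eq_of_lt hk, Nat.zero_add,
    Nat.mod_eq_of_lt hd]

lemma wal_add (hp : 2 ≤ p) {k d m : ℕ} (hk : k < p ^ m) (hd : d < p) (z : ℝ) :
    wal p (d * p ^ m + k) z = wal p k z * omega p ^ (xdigit p z (m + 1) * d) := by
  have h1 : d * p ^ m + k < p ^ (m + 1) := by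
    have : (d + 1) * p ^ m ≤ p * p ^ m := Nat.mul_le_mul_right _ (by omega)
    calc d * p ^ m + k < (d + 1) * p ^ m := by nlinarith
    _ ≤ p ^ (m+1) := by rw [pow_succ]; nlinarith [pow_pos (by omega : 0 < p) m]
  rw [wal_eq hp h1 z, wal_eq hp (lt_of_lt_of_le hk (Nat.pow_le_pow_right (by omega) (Nat.le_succ m))) z,
    ← pow_add]
  congr 1
  rw [Finset.sum_range_succ, Finset.sum_range_succ, ndigit_add_high hp hk hd,
    ndigit_eq_zero hk, mul_zero, add_zero]
  congr 1
  exact Finset.sum_congr rfl fun i hi => by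
    rw [ndigit_add_low hp hk (Finset.mem_range.1 hi)]

/-- character sum -/
lemma char_sum (hp : 2 ≤ p) {c : ℕ} (hc0 : c ≠ 0) (hcp : c < p) :
    ∑ d ∈ Finset.range p, omega p ^ (c * d) = 0 := by
  have h1 : ∀ d, omega p ^ (c * d) = (omega p ^ c) ^ d := fun d => by rw [← pow_mul]
  simp only [h1]
  rw [geom_sum_eq (omega_pow_ne_one (by omega) hcp), ← pow_mul, mul_comm c p, pow_mul,
    omega_pow_p (by omega), one_pow, sub_self, zero_div]

end Wsec

section Wvals
variable {p : ℕ}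

noncomputable def W (p : ℕ) (z : ℝ) (m : ℕ) : ℂ := ∑ k ∈ Finset.range (p ^ m), wal p k z

lemma sum_range_pow_succ (hp : 2 ≤ p) (m : ℕ) (F : ℕ → ℂ) :
    ∑ k ∈ Finset.range (p ^ (m + 1)), F k
      = ∑ d ∈ Finset.range p, ∑ k ∈ Finset.range (p ^ m), F (d * p ^ m + k) := by
  rw [← Finset.sum_product']
  apply Finset.sum_nbij' (fun k => ((k / p ^ m, k % p ^ m) : ℕ × ℕ))
    (fun x => x.1 * p ^ m + x.2)
  · intro k hk
    simp only [Finset.mem_range, Finset.mem_product] at *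
    constructor
    · rw [Nat.div_lt_iff_lt_mul (by positivity), mul_comm]; rwa [pow_succ] at hk
    · exact Nat.mod_lt _ (by positivity)
  · intro x hx
    simp only [Finset.mem_range, Finset.mem_product] at *
    have h1 : (x.1 + 1) * p ^ m ≤ p * p ^ m := Nat.mul_le_mul_right _ (by omega)
    calc x.1 * p ^ m + x.2 < (x.1 + 1) * p ^ m := by nlinarith
    _ ≤ p ^ (m + 1) := by rw [pow_succ]; nlinarith [pow_pos (by omega : 0 < p) m]
  · intro k hk
    simp only
    rw [mul_comm, Nat.div_add_mod]
  · intro x hx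
    simp only [Finset.mem_range, Finset.mem_product] at hx
    have h2 : x.1 * p ^ m + x.2 = x.2 + x.1 * p ^ m := by ring
    rw [h2, Nat.add_mul_div_right _ _ (by positivity), Nat.div_eq_of_lt hx.2, Nat.zero_add,
      Nat.add_mul_mod_self_right, Nat.mod_eq_of_lt hx.2]
  · intro k hk
    simp only
    rw [mul_comm, Nat.div_add_mod]

lemma W_succ (hp : 2 ≤ p) (z : ℝ) (m : ℕ) :
    W p z (m + 1) = (∑ d ∈ Finset.range p, omega p ^ (xdigit p z (m + 1) * d)) * W p z m := by
  rw [W, sum_range_pow_succ hp m, Finset.sum_mul, W]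
  refine Finset.sum_congr rfl fun d hd => ?_
  rw [Finset.mul_sum]
  refine Finset.sum_congr rfl fun k hk => ?_
  rw [wal_add hp (Finset.mem_range.1 hk) (Finset.mem_range.1 hd) z, mul_comm]

lemma W_eq_pow (hp : 2 ≤ p) (z : ℝ) (m : ℕ) (h : ∀ j, 1 ≤ j → j ≤ m → xdigit p z j = 0) :
    W p z m = (p : ℂ) ^ m := by
  induction m with
  | zero => simp [W, wal, ndigit]
  | succ n ih =>
    rw [W_succ hp z n, ih (fun j h1 h2 => h j h1 (by omega)), h (n + 1) (by omega) le_rfl]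
    simp [pow_succ, mul_comm]

lemma W_eq_zero (hp : 2 ≤ p) (z : ℝ) (m i : ℕ) (hi : 1 ≤ i) (him : i ≤ m)
    (hzi : xdigit p z i ≠ 0) : W p z m = 0 := by
  induction m with
  | zero => omega
  | succ n ih =>
    rw [W_succ hp z n]
    rcases Nat.lt_or_ge i (n + 1) with h | h
    · rw [ih (by omega), mul_zero]
    · have : i = n + 1 := by omega
      rw [← this, char_sum hp hzi (xdigit_lt (by omega) z i), zero_mul]

end Wvals

lemma key_real (p : ℕ) (hp : 2 ≤ p) (α : ℝ) (hα : 1 < α) (n : ℕ) :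
    (∑ a ∈ Finset.range n, ((p:ℝ)^α - p)/((p:ℝ)^α * ((p:ℝ)-1)) * (p:ℝ)^(-(α*(a:ℝ))) *
        ((p:ℝ)^(a+1) - (p:ℝ)^a))
      - ((p:ℝ)^α - p)/((p:ℝ)^α * ((p:ℝ)-1)) * (p:ℝ)^(-(α*(n:ℝ))) * (p:ℝ)^n
    = 1 - (p:ℝ)^((((n:ℝ)+1))*(1-α)) * ((p:ℝ)^α - 1)/((p:ℝ)-1) := by
  have hp0 : (0:ℝ) < p := by positivity
  have hp1 : (1:ℝ) < p := by exact_mod_cast (by omega : 1 < p)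
  set q : ℝ := (p:ℝ) ^ (1 - α) with hq
  set P : ℝ := (p:ℝ) ^ α with hP
  have hP0 : 0 < P := Real.rpow_pos_of_pos hp0 _
  have hq0 : 0 < q := Real.rpow_pos_of_pos hp0 _
  have hq1 : q < 1 := Real.rpow_lt_one_of_one_lt_of_neg hp1 (by linarith)
  have hqP : q * P = p := by
    rw [hq, hP, ← Real.rpow_add hp0]
    norm_num
  -- rewrite p^{-(αa)} * p^a = q^a
  have hterm : ∀ a : ℕ, (p:ℝ)^(-(α*(a:ℝ))) * ((p:ℝ)^a : ℝ) = q ^ a := by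
    intro a
    rw [hq, ← Real.rpow_natCast (p:ℝ) a, ← Real.rpow_add hp0,
      ← Real.rpow_natCast ((p:ℝ)^(1-α)) a, ← Real.rpow_mul hp0.le]
    ring_nf
  have hsum : ∑ a ∈ Finset.range n, ((p:ℝ)^α - p)/((p:ℝ)^α * ((p:ℝ)-1)) * (p:ℝ)^(-(α*(a:ℝ))) *
        ((p:ℝ)^(a+1) - (p:ℝ)^a)
      = (P - p)/(P * ((p:ℝ)-1)) * (((p:ℝ)-1) * ((q^n - 1)/(q-1))) := by
    calc ∑ a ∈ Finset.range n, ((p:ℝ)^α - p)/((p:ℝ)^α * ((p:ℝ)-1)) * (p:ℝ)^(-(α*(a:ℝ))) *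
        ((p:ℝ)^(a+1) - (p:ℝ)^a)
        = ∑ a ∈ Finset.range n, (P - p)/(P * ((p:ℝ)-1)) * (((p:ℝ)-1) * q ^ a) := by
          refine Finset.sum_congr rfl fun a ha => ?_
          rw [← hterm a, ← hP]; ring
      _ = (P - p)/(P * ((p:ℝ)-1)) * (((p:ℝ)-1) * ∑ a ∈ Finset.range n, q ^ a) := by
          rw [← Finset.mul_sum, ← Finset.mul_sum]
      _ = _ := by rw [geom_sum_eq hq1.ne]
  have hpow : (p:ℝ)^((((n:ℝ)+1))*(1-α)) = q ^ n * q := by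
    rw [hq, ← Real.rpow_natCast ((p:ℝ)^(1-α)) n, ← Real.rpow_mul hp0.le, ← Real.rpow_add hp0]
    ring_nf
  have hlast : ((p:ℝ)^α - p)/((p:ℝ)^α * ((p:ℝ)-1)) * (p:ℝ)^(-(α*(n:ℝ))) * (p:ℝ)^n
      = (P - p)/(P * ((p:ℝ)-1)) * q ^ n := by
    rw [mul_assoc, hterm n, hP]
  rw [hsum, hlast, hpow]
  have hpm1 : (p:ℝ) - 1 ≠ 0 := by linarith
  have hqm1 : q - 1 ≠ 0 := by linarith
  have hpe : (p:ℝ) = q * P := hqP.symm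
  rw [hpe] at hpm1 ⊢
  have hP : P ≠ 0 := hP0.ne'
  have e : (P - q*P)/(P * (q*P-1)) = (1-q)/(q*P-1) := by
    rw [div_eq_div_iff (mul_ne_zero hP hpm1) hpm1]; ring
  have e2 : (q*P-1) * ((q^n-1)/(q-1)) * (1-q) = -(q*P-1) * (q^n-1) := by
    field_simp; ring
  rw [e, div_mul_eq_mul_div, div_mul_eq_mul_div, mul_comm (1-q), e2, div_sub_div_same,
    eq_sub_iff_add_eq, ← add_div, div_eq_one_iff_eq hpm1]
  ring

section blocks
variable {p : ℕ}

lemma blocks (hp : 2 ≤ p) (α : ℝ) (z : ℝ) (M : ℕ) :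
    ∑ k ∈ Finset.Ico 1 (p ^ M),
        ((((p : ℝ) ^ α - p) / ((p : ℝ) ^ α * ((p : ℝ) - 1)) *
          (p : ℝ) ^ (-(α * (Nat.log p k : ℝ))) : ℝ) : ℂ) * wal p k z
      = ∑ a ∈ Finset.range M,
        ((((p : ℝ) ^ α - p) / ((p : ℝ) ^ α * ((p : ℝ) - 1)) *
          (p : ℝ) ^ (-(α * (a : ℝ))) : ℝ) : ℂ) * (W p z (a + 1) - W p z a) := by
  induction M with
  | zero => simp
  | succ M ih =>
    have h1 : (1:ℕ) ≤ p ^ M := Nat.one_le_pow _ _ (by omega)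
    have h2 : p ^ M ≤ p ^ (M + 1) := Nat.pow_le_pow_right (by omega) (Nat.le_succ M)
    rw [← Finset.sum_Ico_consecutive _ h1 h2, ih, Finset.sum_range_succ]
    congr 1
    have hlog : ∀ k ∈ Finset.Ico (p ^ M) (p ^ (M+1)), Nat.log p k = M := fun k hk => by
      obtain ⟨hk1, hk2⟩ := Finset.mem_Ico.1 hk
      exact Nat.log_eq_of_pow_le_of_lt_pow hk1 hk2
    rw [Finset.sum_congr rfl (fun k hk => by rw [hlog k hk]), ← Finset.mul_sum,
      Finset.sum_Ico_eq_sub _ h2, W, W]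

end blocks

lemma summable_f (p : ℕ) (hp : 2 ≤ p) (α : ℝ) (hα : 1 < α) (z : ℝ) :
    Summable (fun k : ℕ => ((((p : ℝ) ^ α - p) / ((p : ℝ) ^ α * ((p : ℝ) - 1)) *
          (p : ℝ) ^ (-(α * (Nat.log p (k + 1) : ℝ))) : ℝ) : ℂ) * wal p (k + 1) z) := by
  have hp0 : (0:ℝ) < p := by positivity
  set c : ℝ := ((p : ℝ) ^ α - p) / ((p : ℝ) ^ α * ((p : ℝ) - 1)) with hc
  have hs0 : Summable (fun k : ℕ => ((k:ℝ)) ^ (-α)) := Real.summable_nat_rpow.2 (by linarith)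
  have hs1 : Summable (fun k : ℕ => (((k+1:ℕ):ℝ)) ^ (-α)) := (summable_nat_add_iff 1).2 hs0
  refine Summable.of_norm_bounded (g := fun k => |c| * (p:ℝ) ^ α * (((k+1:ℕ):ℝ)) ^ (-α))
    ((hs1.mul_left _)) (fun k => ?_)
  set L : ℕ := Nat.log p (k + 1) with hL
  have hwal : ‖(wal p (k+1) z)‖ = 1 := abs_wal (by omega) _ _
  simp only [norm_mul]
  rw [hwal, mul_one, Complex.norm_real, Real.norm_eq_abs, abs_mul]
  have hXpos : (0:ℝ) < (p:ℝ) ^ (-(α * (L : ℝ))) := Real.rpow_pos_of_pos hp0 _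
  rw [abs_of_pos hXpos]
  have hb : ((k+1:ℕ):ℝ) ≤ (p:ℝ) * (p:ℝ) ^ (L:ℕ) := by
    have := Nat.lt_pow_succ_log_self (by omega : 1 < p) (k+1)
    calc ((k+1:ℕ):ℝ) ≤ ((p ^ (L+1) : ℕ) : ℝ) := by exact_mod_cast this.le
    _ = (p:ℝ) * (p:ℝ) ^ (L:ℕ) := by push_cast [pow_succ]; ring
  have key : (p:ℝ) ^ (-(α * (L : ℝ))) ≤ (p:ℝ) ^ α * (((k+1:ℕ):ℝ)) ^ (-α) := by
    have h1 : (p:ℝ) ^ (-(α * (L : ℝ))) = ((p:ℝ) ^ (L:ℕ)) ^ (-α) := by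
      rw [← Real.rpow_natCast (p:ℝ) L, ← Real.rpow_mul hp0.le]
      ring_nf
    have h2 : (0:ℝ) < ((k+1:ℕ):ℝ) / p := by positivity
    have h3 : ((k+1:ℕ):ℝ) / p ≤ (p:ℝ) ^ (L:ℕ) := by
      rw [div_le_iff₀ hp0]; linarith [hb]
    have h4 : ((p:ℝ) ^ (L:ℕ)) ^ (-α) ≤ (((k+1:ℕ):ℝ) / p) ^ (-α) :=
      Real.rpow_le_rpow_of_nonpos h2 h3 (by linarith)
    have h5 : (((k+1:ℕ):ℝ) / p) ^ (-α) = (p:ℝ) ^ α * (((k+1:ℕ):ℝ)) ^ (-α) := by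
      rw [Real.div_rpow (by positivity) hp0.le, Real.rpow_neg hp0.le α]
      field_simp
    rw [h1, ← h5]; exact h4
  calc |c| * (p:ℝ) ^ (-(α * (L : ℝ))) ≤ |c| * ((p:ℝ) ^ α * (((k+1:ℕ):ℝ)) ^ (-α)) :=
        mul_le_mul_of_nonneg_left key (abs_nonneg c)
  _ = |c| * (p:ℝ) ^ α * (((k+1:ℕ):ℝ)) ^ (-α) := by ring

/-- closed form of the kernel `K'`:
`Σ_{k≥1} K̂'(k) wal_k(z) = 1 − p^{i(1−α)}(p^α−1)/(p−1)` when the first nonzero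
base-`p` digit of `z` is the `i`-th one. -/
theorem statement14 (p : ℕ) (hp : p.Prime) (α : ℝ) (hα : 1 < α)
    (z : ℝ) (hz0 : 0 < z) (hz1 : z < 1) (i : ℕ) (hi : 1 ≤ i)
    (hzj : ∀ j : ℕ, 1 ≤ j → j < i → xdigit p z j = 0) (hzi : xdigit p z i ≠ 0) :
    ∑' k : ℕ, ((((p : ℝ) ^ α - p) / ((p : ℝ) ^ α * ((p : ℝ) - 1)) *
          (p : ℝ) ^ (-(α * (Nat.log p (k + 1) : ℝ))) : ℝ) : ℂ) * wal p (k + 1) z =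
      ((1 - (p : ℝ) ^ ((i : ℝ) * (1 - α)) * ((p : ℝ) ^ α - 1) / ((p : ℝ) - 1) : ℝ) : ℂ) := by
  have hp2 : 2 ≤ p := hp.two_le
  set f : ℕ → ℂ := fun k => ((((p : ℝ) ^ α - p) / ((p : ℝ) ^ α * ((p : ℝ) - 1)) *
          (p : ℝ) ^ (-(α * (Nat.log p (k + 1) : ℝ))) : ℝ) : ℂ) * wal p (k + 1) z with hf
  have hsum : Summable f := summable_f p hp2 α hα z
  obtain ⟨n, rfl⟩ : ∃ n, i = n + 1 := ⟨i - 1, by omega⟩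
  have heq : ∀ M, n + 1 ≤ M → ∑ k ∈ Finset.range (p ^ M - 1), f k =
      ((1 - (p : ℝ) ^ (((n+1 : ℕ) : ℝ) * (1 - α)) * ((p : ℝ) ^ α - 1) / ((p : ℝ) - 1) : ℝ) : ℂ) := by
    intro M hM
    have hshift : ∑ k ∈ Finset.range (p ^ M - 1), f k =
        ∑ k ∈ Finset.Ico 1 (p ^ M),
          ((((p : ℝ) ^ α - p) / ((p : ℝ) ^ α * ((p : ℝ) - 1)) *
            (p : ℝ) ^ (-(α * (Nat.log p k : ℝ))) : ℝ) : ℂ) * wal p k z := by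
      rw [Finset.sum_Ico_eq_sum_range]
      exact (Finset.sum_congr rfl fun j _ => by rw [add_comm 1 j]).symm
    rw [hshift, blocks hp2 α z M]
    have htrunc : ∑ a ∈ Finset.range M,
          ((((p : ℝ) ^ α - p) / ((p : ℝ) ^ α * ((p : ℝ) - 1)) *
            (p : ℝ) ^ (-(α * (a : ℝ))) : ℝ) : ℂ) * (W p z (a + 1) - W p z a)
        = ∑ a ∈ Finset.range (n + 1),
          ((((p : ℝ) ^ α - p) / ((p : ℝ) ^ α * ((p : ℝ) - 1)) *
            (p : ℝ) ^ (-(α * (a : ℝ))) : ℝ) : ℂ) * (W p z (a + 1) - W p z a) := by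
      refine (Finset.sum_subset (Finset.range_subset_range.2 hM) fun a _ ha => ?_).symm
      have hle : n + 1 ≤ a := by simpa [Finset.mem_range, not_lt] using ha
      rw [W_eq_zero hp2 z (a+1) (n+1) hi (by omega) hzi, W_eq_zero hp2 z a (n+1) hi hle hzi,
        sub_self, mul_zero]
    rw [htrunc, Finset.sum_range_succ]
    have hW1 : ∀ a : ℕ, a ≤ n → W p z a = (p:ℂ) ^ a := fun a ha =>
      W_eq_pow hp2 z a (fun j hj1 hj2 => hzj j hj1 (by omega))
    have hWn1 : W p z (n + 1) = 0 := W_eq_zero hp2 z (n+1) (n+1) hi le_rfl hzi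
    have hcongr : ∀ a ∈ Finset.range n,
        ((((p : ℝ) ^ α - p) / ((p : ℝ) ^ α * ((p : ℝ) - 1)) *
            (p : ℝ) ^ (-(α * (a : ℝ))) : ℝ) : ℂ) * (W p z (a + 1) - W p z a)
        = ((((p : ℝ) ^ α - p) / ((p : ℝ) ^ α * ((p : ℝ) - 1)) *
            (p : ℝ) ^ (-(α * (a : ℝ))) : ℝ) : ℂ) * (((p:ℝ)^(a+1) - (p:ℝ)^a : ℝ) : ℂ) := by
      intro a ha
      have h1 := hW1 (a+1) (Finset.mem_range.1 ha)
      have h2 := hW1 a (Finset.mem_range.1 ha).le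
      rw [h1, h2]
      congr 1
      push_cast
      ring
    rw [Finset.sum_congr rfl hcongr, hWn1, hW1 n le_rfl]
    have hkey := key_real p hp2 α hα n
    have hr : (∑ a ∈ Finset.range n, ((p:ℝ)^α - p)/((p:ℝ)^α * ((p:ℝ)-1)) * (p:ℝ)^(-(α*(a:ℝ))) *
        ((p:ℝ)^(a+1) - (p:ℝ)^a))
        + ((p:ℝ)^α - p)/((p:ℝ)^α * ((p:ℝ)-1)) * (p:ℝ)^(-(α*(n:ℝ))) * (0 - (p:ℝ)^n)
      = 1 - (p:ℝ)^((((n:ℝ)+1))*(1-α)) * ((p:ℝ)^α - 1)/((p:ℝ)-1) := by linarith [hkey]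
    exact_mod_cast hr
  have htop : Filter.Tendsto (fun M : ℕ => p ^ M - 1) Filter.atTop Filter.atTop := by
    refine Filter.tendsto_atTop_atTop.2 fun b => ⟨b, fun m hm => ?_⟩
    have : m < p ^ m := Nat.lt_pow_self (by omega : 1 < p)
    omega
  have h1 : Filter.Tendsto (fun M => ∑ k ∈ Finset.range (p ^ M - 1), f k) Filter.atTop
      (nhds (∑' k, f k)) := hsum.hasSum.tendsto_sum_nat.comp htop
  have h2 : Filter.Tendsto (fun M => ∑ k ∈ Finset.range (p ^ M - 1), f k) Filter.atTop
      (nhds ((1 - (p : ℝ) ^ (((n+1:ℕ) : ℝ) * (1 - α)) * ((p : ℝ) ^ α - 1) / ((p : ℝ) - 1) : ℝ) : ℂ)) := by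
    refine Filter.Tendsto.congr' ?_ tendsto_const_nhds
    filter_upwards [Filter.eventually_ge_atTop (n+1)] with M hM
    exact (heq M hM).symm
  exact tendsto_nhds_unique h1 h2
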